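/- arXiv:2508.03947 — 8 statements merged into one kernel-verified Lean document; each statement's English description precedes it below -/
import Mathlib

section
/- Let R ⊆ A × A be a relation such that its transitive closure R⁺ is contained in a finite union R₁ ∪ ⋯ ∪ R_m, where each Rᵢ is well-founded (admits no infinite chain a : ℕ → A with (a_j, a_{j+1}) ∈ Rᵢ for all j). Then R itself is well-founded, i.e., there is no infinite sequence a : ℕ → A with (a_j, a_{j+1}) ∈ R for all j. -/
open Filter Set

/-- For a map into a finite type, an ultrafilter concentrates on one value. -/
private lemma ultra_const {α β : Type*} [Finite β] (U : Ultrafilter α) (f : α → β) :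
    ∃ b : β, {i | f i = b} ∈ U := by
  obtain ⟨b, hb⟩ := (U.map f).eq_pure_of_finite
  exact ⟨b, by have : {b} ∈ U.map f := by rw [hb]; exact rfl
               simpa [Ultrafilter.mem_map, Set.preimage] using this⟩

theorem podelski_rybalchenko {A : Type*} (R : A → A → Prop) (m : ℕ)
    (Rs : Fin m → A → A → Prop)
    (hsub : ∀ x y, Relation.TransGen R x y → ∃ k, Rs k x y)
    (hwf : ∀ k : Fin m, ¬ ∃ a : ℕ → A, ∀ j, Rs k (a j) (a (j + 1))) :
    ¬ ∃ a : ℕ → A, ∀ j, R (a j) (a (j + 1)) := by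
  rintro ⟨a, ha⟩
  -- transitive closure along the chain
  have htg : ∀ i j : ℕ, i < j → Relation.TransGen R (a i) (a j) := by
    intro i j hij
    induction j with
    | zero => omega
    | succ j ih =>
      rcases Nat.lt_succ_iff_lt_or_eq.mp hij with h | h
      · exact (ih h).tail (ha j)
      · subst h; exact Relation.TransGen.single (ha i)
  classical
  -- coloring of pairs
  have hcolex : ∀ i j : ℕ, ∃ k, i < j → Rs k (a i) (a j) := by
    intro i j
    by_cases h : i < j
    · obtain ⟨k, hk⟩ := hsub _ _ (htg i j h); exact ⟨k, fun _ => hk⟩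
    · have : Relation.TransGen R (a 0) (a 1) := htg 0 1 (by omega)
      obtain ⟨k, _⟩ := hsub _ _ this
      exact ⟨k, fun h' => absurd h' h⟩
  choose col hcol using hcolex
  set U : Ultrafilter ℕ := hyperfilter ℕ with hU
  -- limit color of each index
  have hKex : ∀ i : ℕ, ∃ k, {j | col i j = k} ∈ U := fun i => ultra_const U (col i)
  choose K hK using hKex
  obtain ⟨k, hk⟩ : ∃ k, {i | K i = k} ∈ U := ultra_const U K
  -- iteratively pick an increasing monochromatic sequence
  let S₀ : Set ℕ := {i | K i = k}
  let T := {p : Set ℕ × ℕ // p.1 ∈ U ∧ p.1 ⊆ S₀ ∧ p.2 ∈ p.1}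
  have hne : ∀ s : Set ℕ, s ∈ U → s.Nonempty := fun s hs =>
    Ultrafilter.nonempty_of_mem hs
  have step : ∀ p : T, {q : T // q.1.2 ∈ p.1.1 ∩
      ({j | col p.1.2 j = k} ∩ Set.Ioi p.1.2)} := by
    rintro ⟨⟨S, x⟩, hSU, hSsub, hxS⟩
    have hKx : K x = k := hSsub hxS
    have h1 : {j | col x j = k} ∈ U := by rw [← hKx]; exact hK x
    have h2 : Set.Ioi x ∈ U := by
      refine Nat.hyperfilter_le_atTop ?_
      exact Filter.mem_atTop_sets.mpr ⟨x + 1, fun b hb => by simpa using hb⟩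
    have hS' : S ∩ ({j | col x j = k} ∩ Set.Ioi x) ∈ U :=
      Filter.inter_mem hSU (Filter.inter_mem h1 h2)
    have hy := (hne _ hS').choose_spec
    exact ⟨⟨⟨S ∩ ({j | col x j = k} ∩ Set.Ioi x), (hne _ hS').choose⟩, hS',
      fun z hz => hSsub hz.1, hy⟩, hy⟩
  have h0 : T := ⟨⟨S₀, (hne _ hk).choose⟩, hk, subset_rfl, (hne _ hk).choose_spec⟩
  let g : ℕ → T := fun s => Nat.rec h0 (fun _ p => (step p).1) s
  have hmem : ∀ s, ((g (s+1)).1.2 ∈ (g s).1.1 ∩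
      ({j | col (g s).1.2 j = k} ∩ Set.Ioi (g s).1.2)) := fun s => (step (g s)).2
  -- monochromatic chain
  let b : ℕ → ℕ := fun s => (g s).1.2
  have hcolb : ∀ s, col (b s) (b (s+1)) = k := fun s => (hmem s).2.1
  have hlt : ∀ s, b s < b (s+1) := fun s => (hmem s).2.2
  refine hwf k ⟨fun s => a (b s), fun s => ?_⟩
  have := hcol (b s) (b (s+1)) (hlt s)
  rwa [hcolb s] at this
end

section
/- Consider a dynamical system with state set X, initial set X₀ ⊆ X, and transition function f : X → X, and a set X_VF ⊆ X partitioned into X_VF = ⋃_{i=1}^p X_VF_i. Suppose there exist a function T : X × X → ℝ and, for each 1 ≤ i ≤ p, a function V_i : X × X → ℝ bounded from below and a constant ξ_i > 0, such that: (1) T(x, f(x)) ≥ 0 for all x ∈ X; (2) for all x, y ∈ X, T(f(x), y) ≥ 0 implies T(x, y) ≥ 0; and (3) for all x₀ ∈ X₀, all 1 ≤ i ≤ p, and all z, z' ∈ X_VF_i, if T(x₀, z) ≥ 0 and T(z, z') ≥ 0 then V_i(x₀, z') ≤ V_i(x₀, z) − ξ_i. Then every trajectory ⟨x₀, x₁,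 …⟩ with x₀ ∈ X₀ and x_{k+1} = f(x_k) visits X_VF only finitely often, i.e., there are only finitely many indices k with x_k ∈ X_VF. -/
theorem closure_certificate_finite_visits {X : Type*} (X₀ : Set X) (f : X → X)
    (p : ℕ) (XVF : Fin p → Set X)
    (T : X → X → ℝ) (V : Fin p → X → X → ℝ) (ξ : Fin p → ℝ)
    (hξ : ∀ i, ξ i > 0)
    (hbdd : ∀ i : Fin p, ∃ l : ℝ, ∀ x y : X, l ≤ V i x y)
    (h1 : ∀ x : X, T x (f x) ≥ 0)
    (h2 : ∀ x y : X, T (f x) y ≥ 0 → T x y ≥ 0)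
    (h3 : ∀ x₀ ∈ X₀, ∀ i : Fin p, ∀ z ∈ XVF i, ∀ z' ∈ XVF i,
      T x₀ z ≥ 0 → T z z' ≥ 0 → V i x₀ z' ≤ V i x₀ z - ξ i) :
    ∀ x₀ ∈ X₀, {k : ℕ | f^[k] x₀ ∈ ⋃ i, XVF i}.Finite := by
  -- key transitivity lemma: T x (f^[k+1] x) ≥ 0
  have hA : ∀ (k : ℕ) (x : X), T x (f^[k+1] x) ≥ 0 := by
    intro k
    induction k with
    | zero => intro x; simpa using h1 x
    | succ k ih =>
      intro x
      have := ih (f x)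
      rw [← Function.iterate_succ_apply] at this
      exact h2 _ _ this
  have hB : ∀ (x : X) (k l : ℕ), k < l → T (f^[k] x) (f^[l] x) ≥ 0 := by
    intro x k l hkl
    obtain ⟨m, rfl⟩ : ∃ m, l = k + (m + 1) := ⟨l - k - 1, by omega⟩
    have := hA m (f^[k] x)
    rwa [← Function.iterate_add_apply, Nat.add_comm] at this
  intro x₀ hx₀
  by_contra hinf
  replace hinf : {k : ℕ | f^[k] x₀ ∈ ⋃ i, XVF i}.Infinite := hinf
  -- pigeonhole: some i has infinitely many visits
  have : ∃ i : Fin p, {k : ℕ | f^[k] x₀ ∈ XVF i}.Infinite := by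
    by_contra hno
    push_neg at hno
    have : {k : ℕ | f^[k] x₀ ∈ ⋃ i, XVF i} ⊆ ⋃ i : Fin p, {k : ℕ | f^[k] x₀ ∈ XVF i} := by
      intro k hk
      simp only [Set.mem_iUnion, Set.mem_setOf_eq] at hk ⊢
      exact hk
    exact hinf ((Set.finite_iUnion hno).subset this)
  obtain ⟨i, hi⟩ := this
  -- build a strictly increasing sequence of visit times, all positive
  have hex : ∀ a : ℕ, ∃ b, b ∈ {k : ℕ | f^[k] x₀ ∈ XVF i} ∧ a < b := fun a =>
    hi.exists_gt a
  let seq : ℕ → ℕ := fun n =>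
    Nat.rec (Classical.choose (hex 0)) (fun _ prev => Classical.choose (hex prev)) n
  have hseq0 : seq 0 ∈ {k : ℕ | f^[k] x₀ ∈ XVF i} ∧ 0 < seq 0 :=
    Classical.choose_spec (hex 0)
  have hseqS : ∀ n, seq (n+1) ∈ {k : ℕ | f^[k] x₀ ∈ XVF i} ∧ seq n < seq (n+1) :=
    fun n => Classical.choose_spec (hex (seq n))
  have hmem : ∀ n, f^[seq n] x₀ ∈ XVF i := by
    intro n; cases n with
    | zero => exact hseq0.1
    | succ n => exact (hseqS n).1
  have hpos : ∀ n, 0 < seq n := by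
    intro n; induction n with
    | zero => exact hseq0.2
    | succ n ih => exact ih.trans (hseqS n).2
  -- T x₀ (f^[seq n] x₀) ≥ 0
  have hT0 : ∀ n, T x₀ (f^[seq n] x₀) ≥ 0 := by
    intro n
    obtain ⟨m, hm⟩ : ∃ m, seq n = m + 1 := ⟨seq n - 1, by have := hpos n; omega⟩
    rw [hm]; exact hA m x₀
  -- decrease
  have hdec : ∀ n, V i x₀ (f^[seq (n+1)] x₀) ≤ V i x₀ (f^[seq n] x₀) - ξ i := by
    intro n
    exact h3 x₀ hx₀ i _ (hmem n) _ (hmem (n+1)) (hT0 n) (hB x₀ _ _ (hseqS n).2)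
  have hlin : ∀ n : ℕ, V i x₀ (f^[seq n] x₀) ≤ V i x₀ (f^[seq 0] x₀) - n * ξ i := by
    intro n; induction n with
    | zero => simp
    | succ n ih =>
      calc V i x₀ (f^[seq (n+1)] x₀) ≤ V i x₀ (f^[seq n] x₀) - ξ i := hdec n
        _ ≤ V i x₀ (f^[seq 0] x₀) - n * ξ i - ξ i := by linarith
        _ = V i x₀ (f^[seq 0] x₀) - (n+1 : ℕ) * ξ i := by push_cast; ring
  obtain ⟨l, hl⟩ := hbdd i
  obtain ⟨n, hn⟩ := exists_nat_gt ((V i x₀ (f^[seq 0] x₀) - l) / ξ i)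
  have := hlin n
  have h2n : (V i x₀ (f^[seq 0] x₀) - l) < n * ξ i := by
    have := (div_lt_iff₀ (hξ i)).mp hn
    linarith
  have := hl x₀ (f^[seq n] x₀)
  linarith
end

section
/- Consider a control system with state set X, initial set X₀ ⊆ X, input set U, and transition function f : X × U → X, and a set X_VF ⊆ X partitioned into X_VF = ⋃_{i=1}^p X_VF_i. Suppose there exist T : X × X → ℝ and bounded-from-below functions V_i : X × X → ℝ with constants ξ_i > 0 (1 ≤ i ≤ p) such that: (1) for all x ∈ X there exists u ∈ U with T(x, f(x,u)) ≥ 0; (2) for all x, y ∈ X and all u ∈ U, if T(x, f(x,u)) ≥ 0 and T(f(x,u), y) ≥ 0 then T(x, y) ≥ 0; (3) for all x₀ ∈ X₀, all i, and all z, z' ∈ X_VF_i, if T(x₀, z) ≥ 0 and T(z, z') ≥ 0 then V_i(x₀, z') ≤ V_i(x₀, z) − ξ_i. Then there exists a state-feedback controller κ : X → U (choosing at each state x an input u with T(x, f(x,u)) ≥ 0) under which every closed-loop trajectory starting in X₀ visits X_VF only finitely often. -/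
/-- Closed-loop trajectory of a control system under a state-feedback controller. -/
def trajCL {X U : Type*} (f : X → U → X) (κ : X → U) (x₀ : X) : ℕ → X
  | 0 => x₀
  | k + 1 => f (trajCL f κ x₀ k) (κ (trajCL f κ x₀ k))

theorem control_closure_certificate_finite_visits {X U : Type*} (X₀ : Set X)
    (f : X → U → X) (p : ℕ) (XVF : Fin p → Set X)
    (T : X → X → ℝ) (V : Fin p → X → X → ℝ) (ξ : Fin p → ℝ)
    (hξ : ∀ i, ξ i > 0)
    (hbdd : ∀ i : Fin p, ∃ l : ℝ, ∀ x y : X, l ≤ V i x y)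
    (h1 : ∀ x : X, ∃ u : U, T x (f x u) ≥ 0)
    (h2 : ∀ x y : X, ∀ u : U, T x (f x u) ≥ 0 → T (f x u) y ≥ 0 → T x y ≥ 0)
    (h3 : ∀ x₀ ∈ X₀, ∀ i : Fin p, ∀ z ∈ XVF i, ∀ z' ∈ XVF i,
      T x₀ z ≥ 0 → T z z' ≥ 0 → V i x₀ z' ≤ V i x₀ z - ξ i) :
    ∃ κ : X → U, (∀ x : X, T x (f x (κ x)) ≥ 0) ∧
      ∀ x₀ ∈ X₀, {k : ℕ | trajCL f κ x₀ k ∈ ⋃ i, XVF i}.Finite := by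
  refine ⟨fun x => (h1 x).choose, fun x => (h1 x).choose_spec, ?_⟩
  intro x₀ hx₀
  set κ : X → U := fun x => (h1 x).choose with hκ
  have hstep : ∀ x : X, T x (f x (κ x)) ≥ 0 := fun x => (h1 x).choose_spec
  set tr : ℕ → X := trajCL f κ x₀ with htr
  -- chain: T (tr j) (tr (j+d+1)) ≥ 0
  have hchain : ∀ d j : ℕ, T (tr j) (tr (j + d + 1)) ≥ 0 := by
    intro d
    induction d with
    | zero => intro j; exact hstep (tr j)
    | succ d ih =>
      intro j
      have h' : T (tr (j + 1)) (tr (j + 1 + d + 1)) ≥ 0 := ih (j + 1)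
      have heq : tr (j + 1) = f (tr j) (κ (tr j)) := rfl
      have hgoal : T (tr j) (tr (j + 1 + d + 1)) ≥ 0 := by
        refine h2 (tr j) (tr (j + 1 + d + 1)) (κ (tr j)) (hstep (tr j)) ?_
        rw [← heq]; exact h'
      have : j + 1 + d + 1 = j + (d + 1) + 1 := by ring
      rwa [this] at hgoal
  have hT : ∀ j k : ℕ, j < k → T (tr j) (tr k) ≥ 0 := by
    intro j k hjk
    obtain ⟨d, rfl⟩ : ∃ d, k = j + d + 1 := ⟨k - j - 1, by omega⟩
    exact hchain _ j
  have hfin : ∀ i : Fin p, {k : ℕ | tr k ∈ XVF i}.Finite := by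
    intro i
    by_contra hinf
    replace hinf : Set.Infinite {k : ℕ | tr k ∈ XVF i} := hinf
    set a : ℕ → ℕ := fun n => Nat.nth {k : ℕ | tr k ∈ XVF i} (n + 1) with ha
    have hamem : ∀ n, tr (a n) ∈ XVF i := fun n => Nat.nth_mem_of_infinite hinf (n + 1)
    have hmono : ∀ m n, m < n → a m < a n := by
      intro m n hmn
      exact (Nat.nth_lt_nth hinf).2 (by omega)
    have hpos : ∀ n, 1 ≤ a n := by
      intro n
      have h0 : Nat.nth {k : ℕ | tr k ∈ XVF i} 0 < a n :=
        (Nat.nth_lt_nth hinf).2 (by omega)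
      omega
    have hdec : ∀ n, V i x₀ (tr (a (n + 1))) ≤ V i x₀ (tr (a n)) - ξ i := by
      intro n
      refine h3 x₀ hx₀ i (tr (a n)) (hamem n) (tr (a (n + 1))) (hamem (n + 1)) ?_ ?_
      · have := hT 0 (a n) (hpos n)
        exact this
      · exact hT (a n) (a (n + 1)) (hmono n (n + 1) (by omega))
    have hsum : ∀ n : ℕ, V i x₀ (tr (a n)) ≤ V i x₀ (tr (a 0)) - n * ξ i := by
      intro n
      induction n with
      | zero => simp
      | succ n ih =>
        have := hdec n
        push_cast
        nlinarith
    obtain ⟨l, hl⟩ := hbdd i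
    obtain ⟨n, hn⟩ := exists_nat_gt ((V i x₀ (tr (a 0)) - l) / ξ i)
    have h1' : (V i x₀ (tr (a 0)) - l) < n * ξ i := by
      rw [div_lt_iff₀ (hξ i)] at hn
      linarith
    have := hsum n
    have := hl x₀ (tr (a n))
    linarith
  have : {k : ℕ | tr k ∈ ⋃ i, XVF i} ⊆ ⋃ i, {k : ℕ | tr k ∈ XVF i} := by
    intro k hk
    simp only [Set.mem_setOf_eq, Set.mem_iUnion] at hk ⊢
    exact hk
  exact Set.Finite.subset (Set.finite_iUnion hfin) this
end

section
/- Consider a dynamical system (X, X₀, f) with f : X → X and a set X_INF ⊆ X. Suppose there exist T : (X × ℕ) × (X × ℕ) → ℝ and V : X × X × ℕ → ℝ such that for each j ∈ ℕ there is a lower bound l_j with l_j ≤ V(x, y, j) for all x, y, and a constant ξ_j > 0, satisfying: (1) for all x ∈ X and j ∈ ℕ, T((x,j), (f(x), k)) ≥ 0 where k = j+1 if x ∈ X_INF and k = j otherwise; (2) for all x, y ∈ X and j ≤ ℓ, if T((x,j), (f(x), k)) ≥ 0 and T((f(x), k), (y, ℓ)) ≥ 0 then T((x,j), (y, ℓ))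 ≥ 0, with k as above; (3) for all x₀ ∈ X₀, j ∈ ℕ, and z, z' ∈ X \ X_INF, if T((x₀,0), (z,j)) ≥ 0 and T((z,j), (z',j)) ≥ 0 then V(x₀, z', j) ≤ V(x₀, z, j) − ξ_j. Then every trajectory starting in X₀ visits X_INF infinitely often. -/
theorem counter_closure_certificate_infinite_visits {X : Type*} (X₀ : Set X)
    (f : X → X) (XINF : Set X) [DecidablePred (· ∈ XINF)]
    (T : (X × ℕ) → (X × ℕ) → ℝ) (V : X → X → ℕ → ℝ)
    (l : ℕ → ℝ) (ξ : ℕ → ℝ)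
    (hbdd : ∀ j : ℕ, ∀ x y : X, l j ≤ V x y j)
    (hξ : ∀ j : ℕ, ξ j > 0)
    (h1 : ∀ (x : X) (j : ℕ),
      T (x, j) (f x, if x ∈ XINF then j + 1 else j) ≥ 0)
    (h2 : ∀ (x y : X) (j ℓ : ℕ), j ≤ ℓ →
      T (x, j) (f x, if x ∈ XINF then j + 1 else j) ≥ 0 →
      T (f x, if x ∈ XINF then j + 1 else j) (y, ℓ) ≥ 0 →
      T (x, j) (y, ℓ) ≥ 0)
    (h3 : ∀ x₀ ∈ X₀, ∀ (j : ℕ), ∀ z ∈ Set.univ \ XINF, ∀ z' ∈ Set.univ \ XINF,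
      T (x₀, 0) (z, j) ≥ 0 → T (z, j) (z', j) ≥ 0 →
      V x₀ z' j ≤ V x₀ z j - ξ j) :
    ∀ x₀ ∈ X₀, {k : ℕ | f^[k] x₀ ∈ XINF}.Infinite := by
  classical
  intro x₀ hx₀
  by_contra hfin
  rw [Set.not_infinite] at hfin
  obtain ⟨N, hNub⟩ := hfin.bddAbove
  have hN : ∀ k, N + 1 ≤ k → f^[k] x₀ ∉ XINF := by
    intro k hk hmem
    have := hNub hmem
    omega
  set M := N + 1 with hM
  -- counter
  let c : ℕ → ℕ := fun n => ((Finset.range n).filter (fun i => f^[i] x₀ ∈ XINF)).card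
  have csucc : ∀ n, c (n + 1) = if f^[n] x₀ ∈ XINF then c n + 1 else c n := by
    intro n
    simp only [c, Finset.range_add_one, Finset.filter_insert]
    split_ifs with h
    · rw [Finset.card_insert_of_notMem (by simp)]
    · rfl
  have cmono : Monotone c := fun a b hab =>
    Finset.card_le_card (Finset.filter_subset_filter _ (Finset.range_subset_range.2 hab))
  have step : ∀ n, T (f^[n] x₀, c n) (f^[n + 1] x₀, c (n + 1)) ≥ 0 := by
    intro n
    rw [Function.iterate_succ_apply', csucc n]
    exact h1 (f^[n] x₀) (c n)
  have chain : ∀ d n, T (f^[n] x₀, c n) (f^[n + d + 1] x₀, c (n + d + 1)) ≥ 0 := by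
    intro d
    induction d with
    | zero => intro n; exact step n
    | succ d ih =>
      intro n
      have key : (f (f^[n] x₀), if f^[n] x₀ ∈ XINF then c n + 1 else c n)
          = (f^[n + 1] x₀, c (n + 1)) := by
        rw [Function.iterate_succ_apply', csucc]
      have h2' := h2 (f^[n] x₀) (f^[n + (d + 1) + 1] x₀) (c n) (c (n + (d + 1) + 1))
        (cmono (by omega))
      rw [key] at h2'
      apply h2' (step n)
      have h := ih (n + 1)
      have e : n + 1 + d + 1 = n + (d + 1) + 1 := by omega
      rw [e] at h
      exact h
  set j := c M with hj
  have cconst : ∀ n, M ≤ n → c n = j := by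
    intro n hn
    induction n, hn using Nat.le_induction with
    | base => rfl
    | succ n hn ih => rw [csucc, if_neg (hN n hn), ih]
  have c0 : c 0 = 0 := by simp [c]
  have dec : ∀ k, V x₀ (f^[M + k + 1] x₀) j ≤ V x₀ (f^[M + k] x₀) j - ξ j := by
    intro k
    apply h3 x₀ hx₀ j _ ⟨Set.mem_univ _, hN _ (by omega)⟩ _ ⟨Set.mem_univ _, hN _ (by omega)⟩
    · have h := chain (M + k - 1) 0
      have e : 0 + (M + k - 1) + 1 = M + k := by omega
      rw [e] at h
      rwa [show f^[0] x₀ = x₀ from rfl, c0, cconst _ (by omega)] at h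
    · have h := step (M + k)
      rwa [cconst _ (by omega), cconst _ (by omega)] at h
  have tele : ∀ k : ℕ, V x₀ (f^[M + k] x₀) j ≤ V x₀ (f^[M] x₀) j - k * ξ j := by
    intro k
    induction k with
    | zero => simp
    | succ k ih =>
      have h := dec k
      have e : M + k + 1 = M + (k + 1) := by omega
      rw [e] at h
      push_cast
      linarith
  obtain ⟨k, hk⟩ := exists_nat_gt ((V x₀ (f^[M] x₀) j - l j) / ξ j)
  have hk' : V x₀ (f^[M] x₀) j - l j < k * ξ j := by
    rw [div_lt_iff₀ (hξ j)] at hk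
    linarith
  have := hbdd j x₀ (f^[M + k] x₀)
  have := tele k
  linarith
end

section
/- Let c : Q → ℕ be a priority function on a finite set Q and ρ : ℕ → Q an infinite sequence. For every state q with c(q) odd, suppose either (a) q occurs only finitely often in ρ, or (b) some q' with c(q') even and c(q') < c(q) occurs infinitely often in ρ. Then ρ satisfies the min-even parity condition: min{c(q) : q ∈ Inf(ρ)} is even. -/
theorem parity_min_even_sound {Q : Type*} [Fintype Q] (c : Q → ℕ) (ρ : ℕ → Q)
    (h : ∀ q : Q, Odd (c q) →
      {n : ℕ | ρ n = q}.Finite ∨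
        ∃ q' : Q, Even (c q') ∧ c q' < c q ∧ {n : ℕ | ρ n = q'}.Infinite) :
    Even (sInf (c '' {q : Q | {n : ℕ | ρ n = q}.Infinite})) := by
  have hex : ∃ q : Q, {n : ℕ | ρ n = q}.Infinite := by
    by_contra hc
    push_neg at hc
    have huniv : (Set.univ : Set ℕ) = ⋃ q, {n | ρ n = q} := by
      ext n; simp
    have : (Set.univ : Set ℕ).Finite := by
      rw [huniv]; exact Set.finite_iUnion hc
    exact Set.infinite_univ this
  obtain ⟨q0, hq0⟩ := hex
  have hne : (c '' {q : Q | {n : ℕ | ρ n = q}.Infinite}).Nonempty := ⟨c q0, q0, hq0, rfl⟩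
  obtain ⟨q, hq, hqc⟩ := Nat.sInf_mem hne
  rcases Nat.even_or_odd (c q) with he | ho
  · rwa [← hqc]
  · rcases h q ho with hf | ⟨q', he', hlt, hinf⟩
    · exact absurd hq hf.not_infinite
    · have hle : sInf (c '' {q : Q | {n : ℕ | ρ n = q}.Infinite}) ≤ c q' :=
        Nat.sInf_le ⟨q', hinf, rfl⟩
      omega
end

section
/- Let X be a set, f : X → X, X₀ ⊆ X, and T : X × X → ℝ satisfy T(x, f(x)) ≥ 0 for all x ∈ X and, for all x, y ∈ X, T(f(x), y) ≥ 0 implies T(x, y) ≥ 0. Suppose further there exist X_INF ⊆ X and ξ > 0 such that for all x₀ ∈ X₀ and y ∈ X \ X_INF, if T(x₀, y) ≥ 0 and T(y, f(y)) ≥ 0 then T(x₀, f(y)) ≥ T(x₀, y) + ξ. If additionally T is bounded from above, then every trajectory starting in X₀ visits X_INF infinitely often. -/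
theorem recurrence_closure_certificate {X : Type*} (X₀ : Set X) (f : X → X)
    (T : X → X → ℝ) (XINF : Set X) (ξ : ℝ) (hξ : ξ > 0)
    (h1 : ∀ x : X, T x (f x) ≥ 0)
    (h2 : ∀ x y : X, T (f x) y ≥ 0 → T x y ≥ 0)
    (h3 : ∀ x₀ ∈ X₀, ∀ y ∈ Set.univ \ XINF,
      T x₀ y ≥ 0 → T y (f y) ≥ 0 → T x₀ (f y) ≥ T x₀ y + ξ)
    (hbdd : ∃ u : ℝ, ∀ x y : X, T x y ≤ u) :
    ∀ x₀ ∈ X₀, {k : ℕ | f^[k] x₀ ∈ XINF}.Infinite := by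
  -- auxiliary: T x (f^[m+1] x) ≥ 0 for all m, x
  have aux : ∀ m : ℕ, ∀ x : X, T x (f^[m+1] x) ≥ 0 := by
    intro m
    induction m with
    | zero => intro x; simpa using h1 x
    | succ n ih =>
      intro x
      have := ih (f x)
      have heq : f^[n+1] (f x) = f^[n+1+1] x := by
        rw [← Function.iterate_succ_apply]
      rw [heq] at this
      exact h2 x _ this
  intro x₀ hx₀
  by_contra hfin
  rw [Set.not_infinite] at hfin
  obtain ⟨N, hN⟩ := hfin.bddAbove
  obtain ⟨u, hu⟩ := hbdd
  -- for k > N, f^[k] x₀ ∉ XINF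
  have hout : ∀ k : ℕ, k > N → f^[k] x₀ ∉ XINF := by
    intro k hk hmem
    exact absurd (hN hmem) (not_le.mpr hk)
  -- growth: T x₀ (f^[N+1+n] x₀) ≥ T x₀ (f^[N+1] x₀) + n * ξ
  have grow : ∀ n : ℕ, T x₀ (f^[N+1+n] x₀) ≥ T x₀ (f^[N+1] x₀) + n * ξ := by
    intro n
    induction n with
    | zero => simp
    | succ m ih =>
      have hy : f^[N+1+m] x₀ ∈ Set.univ \ XINF := by
        constructor
        · trivial
        · exact hout _ (by omega)
      have hT1 : T x₀ (f^[N+1+m] x₀) ≥ 0 := by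
        have := aux (N+m) x₀
        have heq : N + m + 1 = N + 1 + m := by omega
        rwa [heq] at this
      have hT2 : T (f^[N+1+m] x₀) (f (f^[N+1+m] x₀)) ≥ 0 := h1 _
      have := h3 x₀ hx₀ _ hy hT1 hT2
      have heq : f (f^[N+1+m] x₀) = f^[N+1+(m+1)] x₀ := by
        have : N+1+(m+1) = (N+1+m)+1 := by omega
        rw [this, Function.iterate_succ_apply']
      rw [heq] at this
      push_cast
      linarith
  obtain ⟨n, hn⟩ := exists_nat_gt ((u - T x₀ (f^[N+1] x₀)) / ξ)
  have hnξ : (u - T x₀ (f^[N+1] x₀)) < n * ξ := by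
    rwa [div_lt_iff₀ hξ] at hn
  have := grow n
  have := hu x₀ (f^[N+1+n] x₀)
  linarith
end

section
/- There exists a set X, a function f : X → X, an initial state x₀ ∈ X, and a set X_INF ⊆ X such that the trajectory x_{k+1} = f(x_k) visits X_INF infinitely often, yet the gaps between consecutive visits to X_INF are unbounded; consequently, for every ξ > 0 and every bounded function T : X × X → ℝ, the conditions (1) T(x, f(x)) ≥ 0 for all x; (2) T(f(x), y) ≥ 0 implies T(x, y) ≥ 0 for all x, y; and (3) for all y ∉ X_INF, T(x₀, y) ≥ 0 and T(y, f(y)) ≥ 0 imply T(x₀, f(y)) ≥ T(x₀, y) + ξ, cannot all hold. -/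
theorem recurrence_certificate_incomplete :
    ∃ (X : Type) (f : X → X) (x₀ : X) (XINF : Set X),
      {k : ℕ | f^[k] x₀ ∈ XINF}.Infinite ∧
      (∀ N : ℕ, ∃ k : ℕ, ∀ m : ℕ, m < N → f^[k + m] x₀ ∉ XINF) ∧
      ∀ ξ : ℝ, ξ > 0 → ∀ T : X → X → ℝ,
        (∃ l u : ℝ, ∀ x y : X, l ≤ T x y ∧ T x y ≤ u) →
        ¬ ((∀ x : X, T x (f x) ≥ 0) ∧
           (∀ x y : X, T (f x) y ≥ 0 → T x y ≥ 0) ∧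
           (∀ y : X, y ∉ XINF → T x₀ y ≥ 0 → T y (f y) ≥ 0 →
             T x₀ (f y) ≥ T x₀ y + ξ)) := by
  have hiter : ∀ k : ℕ, Nat.succ^[k] 0 = k := by
    intro k
    induction k with
    | zero => rfl
    | succ n ih => rw [Function.iterate_succ_apply', ih]
  refine ⟨ℕ, Nat.succ, 0, {n | ∃ m : ℕ, n = 2 ^ m}, ?_, ?_, ?_⟩
  · have h : {k : ℕ | Nat.succ^[k] 0 ∈ {n | ∃ m : ℕ, n = 2 ^ m}}
        = {k : ℕ | ∃ m : ℕ, k = 2 ^ m} := by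
      ext k; simp [hiter]
    rw [h]
    exact Set.infinite_of_injective_forall_mem (f := fun m : ℕ => 2 ^ m)
      (Nat.pow_right_injective (by norm_num)) (fun a => ⟨a, rfl⟩)
  · intro N
    refine ⟨2 ^ N + 1, fun m hm hmem => ?_⟩
    rw [hiter] at hmem
    obtain ⟨e, he⟩ := hmem
    have h1 : 2 ^ N < 2 ^ e := by omega
    have h2 : 2 ^ e < 2 ^ (N + 1) := by
      have hN : N < 2 ^ N := Nat.lt_two_pow_self
      have : 2 ^ (N + 1) = 2 ^ N + 2 ^ N := by ring
      omega
    have hNe : N < e := (Nat.pow_lt_pow_iff_right (by norm_num)).mp h1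
    have heN : e < N + 1 := (Nat.pow_lt_pow_iff_right (by norm_num)).mp h2
    omega
  · rintro ξ hξ T ⟨l, u, hbd⟩ ⟨h1, h2, h3⟩
    simp only [hiter] at *
    -- T x (x + d + 1) ≥ 0
    have hpos : ∀ d x : ℕ, T x (x + d + 1) ≥ 0 := by
      intro d
      induction d with
      | zero => intro x; simpa using h1 x
      | succ n ih =>
        intro x
        have := ih (x + 1)
        have h2' := h2 x (x + n + 2)
        simp only [Nat.succ_eq_add_one] at h2' ⊢
        have : T (x + 1) (x + n + 2) ≥ 0 := by
          have := ih (x + 1); convert this using 2; omega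
        have := h2' (by convert this using 2)
        convert this using 2; omega
    have h0pos : ∀ n : ℕ, 1 ≤ n → T 0 n ≥ 0 := by
      intro n hn
      have := hpos (n - 1) 0
      convert this using 2; omega
    set N : ℕ := ⌈u / ξ⌉₊ + 1 with hN
    set k : ℕ := 2 ^ N + 1 with hk
    have hgap : ∀ m : ℕ, m < N → (k + m) ∉ {n : ℕ | ∃ m : ℕ, n = 2 ^ m} := by
      intro m hm hmem
      obtain ⟨e, he⟩ := hmem
      have hlt : 2 ^ N < 2 ^ e := by omega
      have hlt2 : 2 ^ e < 2 ^ (N + 1) := by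
        have hNlt : N < 2 ^ N := Nat.lt_two_pow_self
        have : 2 ^ (N + 1) = 2 ^ N + 2 ^ N := by ring
        omega
      have hNe : N < e := (Nat.pow_lt_pow_iff_right (by norm_num)).mp hlt
      have heN : e < N + 1 := (Nat.pow_lt_pow_iff_right (by norm_num)).mp hlt2
      omega
    have key : ∀ j : ℕ, j ≤ N → T 0 (k + j) ≥ j * ξ := by
      intro j
      induction j with
      | zero =>
        intro _
        simpa using h0pos k (Nat.le_add_left 1 _)
      | succ n ih =>
        intro hn
        have hn' : n ≤ N := by omega
        have ihn := ih hn'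
        have hnXINF := hgap n (by omega)
        have hT0 : T 0 (k + n) ≥ 0 := le_trans (by positivity) ihn
        have hstep := h3 (k + n) hnXINF hT0 (by simpa using h1 (k + n))
        simp only [Nat.succ_eq_add_one] at hstep
        have : T 0 (k + n + 1) ≥ T 0 (k + n) + ξ := hstep
        have : T 0 (k + (n + 1)) ≥ n * ξ + ξ := by
          rw [show k + (n + 1) = k + n + 1 by omega]
          linarith
        push_cast
        linarith
    have hfinal := key N le_rfl
    have hub := (hbd 0 (k + N)).2
    have hNξ : (N : ℝ) * ξ > u := by
      have hceil : u / ξ ≤ (⌈u / ξ⌉₊ : ℝ) := Nat.le_ceil _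
      have : (N : ℝ) = ⌈u / ξ⌉₊ + 1 := by simp [hN]
      rw [this]
      have := (div_le_iff₀ hξ).mp hceil
      nlinarith
    linarith
end

section
/- Let A be a type, R ⊆ A × A, and B ⊆ A. Say R is well-founded with respect to B if no infinite R-chain ⟨a₀, a₁, …⟩ (with (a_i, a_{i+1}) ∈ R for all i) has infinitely many terms in B. If there exist ξ > 0 and V : A → ℝ bounded from below such that for all b, b' ∈ B, whenever b' is reachable from b via R⁺ (the transitive closure) we have V(b') ≤ V(b) − ξ, then R is well-founded with respect to B. -/
theorem wf_with_respect_to_set {A : Type*} (R : A → A → Prop) (B : Set A)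
    (ξ : ℝ) (hξ : ξ > 0) (V : A → ℝ)
    (hbdd : ∃ l : ℝ, ∀ a : A, l ≤ V a)
    (hdec : ∀ b ∈ B, ∀ b' ∈ B, Relation.TransGen R b b' → V b' ≤ V b - ξ) :
    ∀ a : ℕ → A, (∀ i : ℕ, R (a i) (a (i + 1))) → ¬ {i : ℕ | a i ∈ B}.Infinite := by
  intro a hchain hinf
  obtain ⟨l, hl⟩ := hbdd
  -- chain gives TransGen between any i < j
  have htrans : ∀ i j : ℕ, i < j → Relation.TransGen R (a i) (a j) := by
    intro i j hij
    induction j with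
    | zero => omega
    | succ k ih =>
      rcases Nat.lt_succ_iff_lt_or_eq.mp hij with h | h
      · exact (ih h).tail (hchain k)
      · subst h; exact Relation.TransGen.single (hchain i)
  set p : ℕ → Prop := fun i => a i ∈ B with hp
  have hinf' : (setOf p).Infinite := hinf
  have hmem : ∀ n, p (Nat.nth p n) := fun n => Nat.nth_mem_of_infinite hinf' n
  have hmono : StrictMono (Nat.nth p) := Nat.nth_strictMono hinf'
  have key : ∀ n : ℕ, V (a (Nat.nth p n)) ≤ V (a (Nat.nth p 0)) - n * ξ := by
    intro n
    induction n with
    | zero => simp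
    | succ k ih =>
      have h1 : V (a (Nat.nth p (k+1))) ≤ V (a (Nat.nth p k)) - ξ :=
        hdec _ (hmem k) _ (hmem (k+1)) (htrans _ _ (hmono (Nat.lt_succ_self k)))
      push_cast
      linarith
  obtain ⟨n, hn⟩ := exists_nat_gt ((V (a (Nat.nth p 0)) - l) / ξ)
  have := key n
  have h2 := hl (a (Nat.nth p n))
  have h3 : (V (a (Nat.nth p 0)) - l) < n * ξ := by
    calc (V (a (Nat.nth p 0)) - l) = ((V (a (Nat.nth p 0)) - l) / ξ) * ξ := by
          field_simp
      _ < n * ξ := by exact mul_lt_mul_of_pos_right hn hξ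
  linarith
end
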